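/- Let k ≥ 2 and let L : ℤ → ℚ satisfy L_m = 0 unless 0 ≤ m ≤ k−1 and L_m = L_{k−1−m} for all m ∈ ℤ with 0 ≤ m ≤ k−1. Define the families L^{N,2}, L^{N,3} for all N ≥ k by the downward iteration of the Fano recursion. Then the virtual structural constants at the Calabi–Yau level N = k are symmetric: L^{k,2}_i = L^{k,2}_{k−1−i} and L^{k,3}_i = L^{k,3}_{k−1−i} for all i ∈ ℤ. -/
import Mathlib


/-- Downward iteration of the degree-2 Fano recursion, as a function of the number of
steps `t = 2k − N` below the range `N ≥ 2k` where the constants vanish. -/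
def iter2 (k : ℤ) (L : ℤ → ℚ) : ℕ → ℤ → ℚ
  | 0, _ => 0
  | t + 1, m =>
      (1/2) * (iter2 k L t (m - 1) + iter2 k L t m
        + 2 * L m * L (m + ((2 * k - ((t : ℤ) + 1)) - k)))

/-- Downward iteration of the degree-3 Fano recursion. -/
def iter3 (k : ℤ) (L : ℤ → ℚ) : ℕ → ℤ → ℚ
  | 0, _ => 0
  | t + 1, m =>
      (1/18) * (4 * iter3 k L t (m - 2) + 10 * iter3 k L t (m - 1) + 4 * iter3 k L t m
        + 12 * iter2 k L t (m - 1) * L (m + 2 * ((2 * k - ((t : ℤ) + 1)) - k))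
        + 9 * iter2 k L t m * L (m + 2 * ((2 * k - ((t : ℤ) + 1)) - k))
        + 6 * iter2 k L t m * L (m + 1 + 2 * ((2 * k - ((t : ℤ) + 1)) - k))
        + 6 * L (m - 1) * iter2 k L t (m - 1 + ((2 * k - ((t : ℤ) + 1)) - k))
        + 9 * L m * iter2 k L t (m - 1 + ((2 * k - ((t : ℤ) + 1)) - k))
        + 12 * L m * iter2 k L t (m + ((2 * k - ((t : ℤ) + 1)) - k))
        + 18 * L m * L (m + ((2 * k - ((t : ℤ) + 1)) - k))
            * L (m + 2 * ((2 * k - ((t : ℤ) + 1)) - k)))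

/-- The conic constants `L^{N,2}` obtained by downward iteration of the Fano recursion. -/
def LN2 (k : ℤ) (L : ℤ → ℚ) (N : ℤ) (m : ℤ) : ℚ := iter2 k L (2 * k - N).toNat m

/-- The cubic constants `L^{N,3}` obtained by downward iteration of the Fano recursion. -/
def LN3 (k : ℤ) (L : ℤ → ℚ) (N : ℤ) (m : ℤ) : ℚ := iter3 k L (2 * k - N).toNat m

/-- The family `(L^1 = L, L^2 = L^{N,2}, L^3 = L^{N,3})` of structural constants. -/
def famN (k : ℤ) (L : ℤ → ℚ) (N : ℤ) : ℕ → ℤ → ℚ :=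
  fun d m => if d = 1 then L m else if d = 2 then LN2 k L N m
    else if d = 3 then LN3 k L N m else 0



section Aux

variable (k : ℤ) (L : ℤ → ℚ) (hL : ∀ m : ℤ, L m = L (k - 1 - m))

lemma step2 (t : ℕ) (m : ℤ) :
    iter2 k L (t + 1) m = (1/2) * (iter2 k L t (m - 1) + iter2 k L t m
      + 2 * L m * L (m + (k - (t : ℤ) - 1))) := by
  have h : (2 * k - ((t : ℤ) + 1)) - k = k - (t : ℤ) - 1 := by ring
  rw [iter2, h]

lemma step3 (t : ℕ) (m : ℤ) :
    iter3 k L (t + 1) m = (1/18) * (4 * iter3 k L t (m - 2) + 10 * iter3 k L t (m - 1)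
      + 4 * iter3 k L t m
      + 12 * iter2 k L t (m - 1) * L (m + 2 * (k - (t : ℤ) - 1))
      + 9 * iter2 k L t m * L (m + 2 * (k - (t : ℤ) - 1))
      + 6 * iter2 k L t m * L (m + 1 + 2 * (k - (t : ℤ) - 1))
      + 6 * L (m - 1) * iter2 k L t (m - 1 + (k - (t : ℤ) - 1))
      + 9 * L m * iter2 k L t (m - 1 + (k - (t : ℤ) - 1))
      + 12 * L m * iter2 k L t (m + (k - (t : ℤ) - 1))
      + 18 * L m * L (m + (k - (t : ℤ) - 1)) * L (m + 2 * (k - (t : ℤ) - 1))) := by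
  have h : (2 * k - ((t : ℤ) + 1)) - k = k - (t : ℤ) - 1 := by ring
  rw [iter3, h]

include hL

lemma sym2 : ∀ t : ℕ, ∀ m : ℤ, iter2 k L t m = iter2 k L t ((t : ℤ) - 1 - m) := by
  intro t
  induction t with
  | zero => intro m; rfl
  | succ t ih =>
    intro m
    rw [step2, step2]
    push_cast
    have h1 : iter2 k L t ((t : ℤ) + 1 - 1 - m - 1) = iter2 k L t m := by
      rw [ih]; congr 1; ring
    have h2 : iter2 k L t ((t : ℤ) + 1 - 1 - m) = iter2 k L t (m - 1) := by
      rw [ih]; congr 1; ring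
    have h3 : L ((t : ℤ) + 1 - 1 - m) = L (m + (k - (t : ℤ) - 1)) := by
      rw [hL ((t : ℤ) + 1 - 1 - m)]; congr 1; ring
    have h4 : L ((t : ℤ) + 1 - 1 - m + (k - (t : ℤ) - 1)) = L m := by
      rw [hL ((t : ℤ) + 1 - 1 - m + (k - (t : ℤ) - 1))]; congr 1; ring
    rw [h1, h2, h3, h4]
    ring

lemma sym3 : ∀ t : ℕ, ∀ m : ℤ,
    iter3 k L t m = iter3 k L t (2 * (t : ℤ) - k - 1 - m) := by
  intro t
  induction t with
  | zero => intro m; rfl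
  | succ t ih =>
    intro m
    rw [step3, step3]
    push_cast
    set n : ℤ := 2 * ((t : ℤ) + 1) - k - 1 - m with hn
    have e1 : iter3 k L t (n - 2) = iter3 k L t m := by
      rw [ih]; congr 1; rw [hn]; ring
    have e2 : iter3 k L t (n - 1) = iter3 k L t (m - 1) := by
      rw [ih]; congr 1; rw [hn]; ring
    have e3 : iter3 k L t n = iter3 k L t (m - 2) := by
      rw [ih]; congr 1; rw [hn]; ring
    have e4 : iter2 k L t (n - 1) = iter2 k L t (m + (k - (t : ℤ) - 1)) := by
      rw [sym2 k L hL]; congr 1; rw [hn]; ring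
    have e5 : iter2 k L t n = iter2 k L t (m - 1 + (k - (t : ℤ) - 1)) := by
      rw [sym2 k L hL]; congr 1; rw [hn]; ring
    have e6 : iter2 k L t (n - 1 + (k - (t : ℤ) - 1)) = iter2 k L t m := by
      rw [sym2 k L hL]; congr 1; rw [hn]; ring
    have e7 : iter2 k L t (n + (k - (t : ℤ) - 1)) = iter2 k L t (m - 1) := by
      rw [sym2 k L hL]; congr 1; rw [hn]; ring
    have f1 : L n = L (m + 2 * (k - (t : ℤ) - 1)) := by
      rw [hL n]; congr 1; rw [hn]; ring
    have f2 : L (n + 2 * (k - (t : ℤ) - 1)) = L m := by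
      rw [hL (n + 2 * (k - (t : ℤ) - 1))]; congr 1; rw [hn]; ring
    have f3 : L (n + 1 + 2 * (k - (t : ℤ) - 1)) = L (m - 1) := by
      rw [hL (n + 1 + 2 * (k - (t : ℤ) - 1))]; congr 1; rw [hn]; ring
    have f4 : L (n - 1) = L (m + 1 + 2 * (k - (t : ℤ) - 1)) := by
      rw [hL (n - 1)]; congr 1; rw [hn]; ring
    have f5 : L (n + (k - (t : ℤ) - 1)) = L (m + (k - (t : ℤ) - 1)) := by
      rw [hL (n + (k - (t : ℤ) - 1))]; congr 1; rw [hn]; ring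
    rw [e1, e2, e3, e4, e5, e6, e7, f1, f2, f3, f4, f5]
    ring

end Aux

/-- Remark (i) of the paper: if the line constants are supported in `0 ≤ m ≤ k−1` and
satisfy the Schubert symmetry `L_m = L_{k−1−m}`, then the virtual structural constants
at the Calabi–Yau level `N = k` of the downward Fano iteration are symmetric:
`L̃^{k,k,d}_i = L̃^{k,k,d}_{k−1−i}` for `d = 2, 3` and every `i ∈ ℤ`. -/
theorem virtual_constants_symmetric (k : ℕ) (hk : 2 ≤ k) (L : ℤ → ℚ)
    (hsupp : ∀ m : ℤ, L m ≠ 0 → 0 ≤ m ∧ m ≤ (k : ℤ) - 1)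
    (hsym : ∀ m : ℤ, 0 ≤ m → m ≤ (k : ℤ) - 1 → L m = L ((k : ℤ) - 1 - m)) :
    ∀ i : ℤ, LN2 k L k i = LN2 k L k ((k : ℤ) - 1 - i)
      ∧ LN3 k L k i = LN3 k L k ((k : ℤ) - 1 - i) := by
  have hL : ∀ m : ℤ, L m = L ((k : ℤ) - 1 - m) := by
    intro m
    by_cases h : 0 ≤ m ∧ m ≤ (k : ℤ) - 1
    · exact hsym m h.1 h.2
    · have h1 : L m = 0 := by
        by_contra h'; exact h (hsupp m h')
      have h2 : L ((k : ℤ) - 1 - m) = 0 := by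
        by_contra h'
        have := hsupp _ h'
        omega
      rw [h1, h2]
  have ht : (2 * (k : ℤ) - (k : ℤ)).toNat = k := by omega
  intro i
  constructor
  · have := sym2 (k : ℤ) L hL k i
    simpa [LN2, ht] using this
  · have := sym3 (k : ℤ) L hL k i
    have hc : 2 * (k : ℤ) - (k : ℤ) - 1 - i = (k : ℤ) - 1 - i := by ring
    rw [hc] at this
    simpa [LN3, ht] using this
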